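/- Let G be a group generated by elements a_1,…,a_m (m ≥ 2) which is δ-hyperbolic. Let ℓ and a be integers with 1 ≤ a ≤ ℓ and let x ∈ S_{2ℓ,4a}. Then the number of pairs (g,g') ∈ S_{ℓ,a} × S_{ℓ,a} such that x = gg' is at most |B_{6a+2δ}|. -/
import Mathlib


open Filter Set

namespace GrowthRQ

variable {G : Type*} [Group G] {m : ℕ}

/-- Word norm with respect to the generators `gen i` and their inverses. -/
noncomputable def wordNorm (gen : Fin m → G) (x : G) : ℕ :=
  sInf {n | ∃ w : List (Fin m × Bool), w.length = n ∧
    (w.map (fun p => if p.2 then gen p.1 else (gen p.1)⁻¹)).prod = x}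

/-- Ball of (real) radius `r` for the word norm. -/
def ball (gen : Fin m → G) (r : ℝ) : Set G := {x | (wordNorm gen x : ℝ) ≤ r}

/-- Annulus of elements of norm in `(ℓ - a, ℓ]`. -/
def ann (gen : Fin m → G) (ℓ a : ℝ) : Set G := ball gen ℓ \ ball gen (ℓ - a)

/-- Growth exponent in base `2m-1`. (The limit exists by submultiplicativity,
so it equals the `limsup`.) -/
noncomputable def growthExponent (gen : Fin m → G) : ℝ :=
  Filter.limsup (fun L : ℕ => Real.logb (2 * (m : ℝ) - 1) ((ball gen L).ncard) / L) Filter.atTop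

/-- Gromov product with origin `e`. -/
noncomputable def gromov (gen : Fin m → G) (x y : G) : ℝ :=
  ((wordNorm gen x : ℝ) + (wordNorm gen y : ℝ) - (wordNorm gen (x⁻¹ * y) : ℝ)) / 2

/-- `δ`-hyperbolicity via the Gromov product. -/
def IsHyperbolic (gen : Fin m → G) (δ : ℝ) : Prop :=
  ∀ x y z : G, gromov gen x z ≥ min (gromov gen x y) (gromov gen y z) - δ

/-- Non-elementary: not virtually cyclic. -/
def NonElementary (G : Type*) [Group G] : Prop :=
  ¬ ∃ H : Subgroup G, H.index ≠ 0 ∧ IsCyclic H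

/-- Probability, for `N` independent uniform choices of relators in the ball of radius `ℓ`,
that the chosen tuple satisfies `P`. -/
noncomputable def quotProb (gen : Fin m → G) (ℓ N : ℕ) (P : (Fin N → G) → Prop) : ℝ :=
  (({r : Fin N → G | (∀ i, r i ∈ ball gen (ℓ : ℝ)) ∧ P r}).ncard : ℝ) /
  (({r : Fin N → G | ∀ i, r i ∈ ball gen (ℓ : ℝ)}).ncard : ℝ)

/-- Images of the generators in the quotient by the normal closure of the relators. -/
noncomputable def quotGen (gen : Fin m → G) {N : ℕ} (r : Fin N → G) :
    Fin m → G ⧸ Subgroup.normalClosure (Set.range r) :=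
  fun i => QuotientGroup.mk (gen i)


lemma eval_flip (gen : Fin m → G) (w : List (Fin m × Bool)) :
    (((w.map fun p => (p.1, !p.2)).reverse).map
        (fun p => if p.2 then gen p.1 else (gen p.1)⁻¹)).prod
      = ((w.map (fun p => if p.2 then gen p.1 else (gen p.1)⁻¹)).prod)⁻¹ := by
  induction w with
  | nil => simp
  | cons a t ih =>
    simp only [List.map_cons, List.reverse_cons, List.map_append, List.prod_append,
      List.map_cons, List.map_nil, List.prod_cons, List.prod_nil, List.prod_cons, ih,
      mul_inv_rev]
    cases a.2 <;> simp

lemma exists_word (gen : Fin m → G) (hgen : Subgroup.closure (Set.range gen) = ⊤) (x : G) :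
    ∃ w : List (Fin m × Bool),
      (w.map (fun p => if p.2 then gen p.1 else (gen p.1)⁻¹)).prod = x := by
  have hx : x ∈ Subgroup.closure (Set.range gen) := hgen ▸ Subgroup.mem_top x
  induction hx using Subgroup.closure_induction with
  | mem y hy => obtain ⟨i, rfl⟩ := hy; exact ⟨[(i, true)], by simp⟩
  | one => exact ⟨[], by simp⟩
  | mul y z _ _ hy hz =>
    obtain ⟨w1, h1⟩ := hy; obtain ⟨w2, h2⟩ := hz
    exact ⟨w1 ++ w2, by simp [h1, h2]⟩
  | inv y _ hy =>
    obtain ⟨w, h⟩ := hy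
    exact ⟨(w.map fun p => (p.1, !p.2)).reverse, by rw [eval_flip, h]⟩

lemma wordNorm_spec (gen : Fin m → G) (hgen : Subgroup.closure (Set.range gen) = ⊤) (x : G) :
    ∃ w : List (Fin m × Bool), w.length = wordNorm gen x ∧
      (w.map (fun p => if p.2 then gen p.1 else (gen p.1)⁻¹)).prod = x := by
  have hne : {n | ∃ w : List (Fin m × Bool), w.length = n ∧
      (w.map (fun p => if p.2 then gen p.1 else (gen p.1)⁻¹)).prod = x}.Nonempty := by
    obtain ⟨w, hw⟩ := exists_word gen hgen x
    exact ⟨w.length, w, rfl, hw⟩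
  exact Nat.sInf_mem hne

lemma wordNorm_inv (gen : Fin m → G) (x : G) :
    wordNorm gen x⁻¹ = wordNorm gen x := by
  unfold wordNorm
  congr 1
  ext n
  constructor
  · rintro ⟨w, hl, hp⟩
    exact ⟨(w.map fun p => (p.1, !p.2)).reverse, by simpa using hl,
      by rw [eval_flip, hp, inv_inv]⟩
  · rintro ⟨w, hl, hp⟩
    exact ⟨(w.map fun p => (p.1, !p.2)).reverse, by simpa using hl,
      by rw [eval_flip, hp]⟩

lemma ball_finite (gen : Fin m → G) (hgen : Subgroup.closure (Set.range gen) = ⊤) (r : ℝ) :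
    (ball gen r).Finite := by
  apply Set.Finite.subset
    (((List.finite_length_le (Fin m × Bool) ⌊r⌋₊).image
      (fun w => (w.map (fun p => if p.2 then gen p.1 else (gen p.1)⁻¹)).prod)))
  intro x hx
  obtain ⟨w, hl, hp⟩ := wordNorm_spec gen hgen x
  refine ⟨w, ?_, hp⟩
  simp only [Set.mem_setOf_eq]
  rw [hl]
  exact Nat.le_floor hx


lemma key_estimate (gen : Fin m → G) (δ : ℝ) (hδ : 0 ≤ δ) (hhyp : IsHyperbolic gen δ)
    (ℓ a : ℝ) (ha0 : 0 ≤ a)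
    (x g g' h h' : G) (hgg : x = g * g') (hhh : x = h * h')
    (hg : g ∈ ann gen ℓ a) (hg' : g' ∈ ann gen ℓ a)
    (hh : h ∈ ann gen ℓ a) (hh' : h' ∈ ann gen ℓ a)
    (hx : x ∈ ann gen (2 * ℓ) (4 * a)) :
    g⁻¹ * h ∈ ball gen (6 * a + 2 * δ) := by
  obtain ⟨hg1, hg2⟩ := hg
  obtain ⟨hg'1, hg'2⟩ := hg'
  obtain ⟨hh1, hh2⟩ := hh
  obtain ⟨hh'1, hh'2⟩ := hh'
  obtain ⟨hx1, hx2⟩ := hx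
  simp only [ball, Set.mem_setOf_eq, not_le] at *
  have e1 : g⁻¹ * x = g' := by rw [hgg]; group
  have e2 : x⁻¹ * h = h'⁻¹ := by rw [hhh]; group
  have hyp := hhyp g x h
  unfold gromov at hyp
  rw [e1, e2, wordNorm_inv] at hyp
  have hmin := le_min
    (show ℓ - (5/2) * a ≤ ((wordNorm gen g : ℝ) + (wordNorm gen x : ℝ) - (wordNorm gen g' : ℝ)) / 2 by
      linarith)
    (show ℓ - (5/2) * a ≤ ((wordNorm gen x : ℝ) + (wordNorm gen h : ℝ) - (wordNorm gen h' : ℝ)) / 2 by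
      linarith)
  linarith [hmin, hyp]

/-- in a `δ`-hyperbolic group, for `1 ≤ a ≤ ℓ` and `x ∈ S_{2ℓ,4a}`, the number
of pairs `(g,g') ∈ S_{ℓ,a} × S_{ℓ,a}` with `x = g g'` is at most `|B_{6a+2δ}|`. -/
theorem statement9 {G : Type*} [Group G] {m : ℕ} (hm : 2 ≤ m) (gen : Fin m → G)
    (hgen : Subgroup.closure (Set.range gen) = ⊤)
    (δ : ℝ) (hδ : 0 ≤ δ) (hhyp : IsHyperbolic gen δ)
    (ℓ a : ℕ) (ha1 : 1 ≤ a) (ha : a ≤ ℓ)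
    (x : G) (hx : x ∈ ann gen (2 * (ℓ : ℝ)) (4 * (a : ℝ))) :
    ({p : G × G | p.1 ∈ ann gen (ℓ : ℝ) (a : ℝ) ∧ p.2 ∈ ann gen (ℓ : ℝ) (a : ℝ) ∧
        x = p.1 * p.2}).ncard ≤
      (ball gen (6 * (a : ℝ) + 2 * δ)).ncard := by
  set S := {p : G × G | p.1 ∈ ann gen (ℓ : ℝ) (a : ℝ) ∧ p.2 ∈ ann gen (ℓ : ℝ) (a : ℝ) ∧
      x = p.1 * p.2} with hS
  rcases Set.eq_empty_or_nonempty S with hE | ⟨p₀, hp₀⟩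
  · simp [hE]
  have ha0 : (0 : ℝ) ≤ (a : ℝ) := Nat.cast_nonneg a
  have hmaps : ∀ p ∈ S, p₀.1⁻¹ * p.1 ∈ ball gen (6 * (a : ℝ) + 2 * δ) := by
    intro p hp
    obtain ⟨h1, h2, h3⟩ := hp
    obtain ⟨k1, k2, k3⟩ := hp₀
    exact key_estimate gen δ hδ hhyp (ℓ : ℝ) (a : ℝ) ha0 x p₀.1 p₀.2 p.1 p.2 k3 h3 k1 k2 h1 h2 hx
  have hinj : Set.InjOn (fun p : G × G => p₀.1⁻¹ * p.1) S := by
    intro p hp q hq hpq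
    simp only at hpq
    have h1 : p.1 = q.1 := by
      have := mul_left_cancel hpq
      exact this
    have h2 : p.2 = q.2 := by
      have hp3 := hp.2.2
      have hq3 := hq.2.2
      rw [h1] at hp3
      rw [hp3] at hq3
      exact mul_left_cancel hq3
    exact Prod.ext h1 h2
  exact Set.ncard_le_ncard_of_injOn _ hmaps hinj (ball_finite gen hgen _)

end GrowthRQ
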